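/- If λ = (λ_1, ..., λ_n) ∈ Γ_k with λ_1 ≥ λ_2 ≥ ... ≥ λ_n and λ_i ≤ 0 for some i, then -λ_i ≤ ((n-k)/k) · λ_1. -/

import Mathlib

open Finset

noncomputable def esym {n : ℕ} (k : ℕ) (lam : Fin n → ℝ) : ℝ :=
  ∑ s ∈ Finset.univ.powersetCard k, ∏ i ∈ s, lam i

noncomputable def esym1 {n : ℕ} (k : ℕ) (lam : Fin n → ℝ) (i : Fin n) : ℝ :=
  ∑ s ∈ (Finset.univ.erase i).powersetCard k, ∏ j ∈ s, lam j

noncomputable def esym2 {n : ℕ} (k : ℕ) (lam : Fin n → ℝ) (i j : Fin n) : ℝ :=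
  ∑ s ∈ ((Finset.univ.erase i).erase j).powersetCard k, ∏ l ∈ s, lam l

def GardingCone (n k : ℕ) : Set (Fin n → ℝ) :=
  {lam | ∀ j : ℕ, 1 ≤ j → j ≤ k → 0 < esym j lam}


section AuxLemmas
open Polynomial

variable {α : Type*} [DecidableEq α]
set_option linter.unusedSectionVars false

noncomputable def Esum (w : α → ℝ) (s : Finset α) (k : ℕ) : ℝ :=
  ∑ t ∈ s.powersetCard k, ∏ i ∈ t, w i

@[simp] lemma Esum_zero (w : α → ℝ) (s : Finset α) : Esum w s 0 = 1 := by
  simp [Esum]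

lemma Esum_of_lt (w : α → ℝ) {s : Finset α} {k : ℕ} (h : s.card < k) : Esum w s k = 0 := by
  simp [Esum, Finset.powersetCard_eq_empty.2 h]

lemma Esum_congr {v w : α → ℝ} {s : Finset α} (h : ∀ j ∈ s, v j = w j) (k : ℕ) :
    Esum v s k = Esum w s k := by
  unfold Esum
  refine Finset.sum_congr rfl fun t ht => Finset.prod_congr rfl fun j hj => ?_
  exact h j ((Finset.mem_powersetCard.1 ht).1 hj)

lemma Esum_erase {w : α → ℝ} {s : Finset α} {i : α} (hi : i ∈ s) (k : ℕ) :
    Esum w s (k+1) = Esum w (s.erase i) (k+1) + w i * Esum w (s.erase i) k := by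
  have h1 : i ∉ s.erase i := Finset.notMem_erase i s
  have h2 : insert i (s.erase i) = s := Finset.insert_erase hi
  unfold Esum
  conv_lhs => rw [← h2]
  rw [Finset.powersetCard_succ_insert h1, Finset.sum_union, Finset.sum_image]
  · congr 1
    rw [Finset.mul_sum]
    refine Finset.sum_congr rfl fun t ht => ?_
    rw [Finset.prod_insert (fun hmem => h1 ((Finset.mem_powersetCard.1 ht).1 hmem))]
  · intro t ht u hu htu
    have hit : i ∉ t := fun hmem => h1 ((Finset.mem_powersetCard.1 ht).1 hmem)
    have hiu : i ∉ u := fun hmem => h1 ((Finset.mem_powersetCard.1 hu).1 hmem)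
    rw [← Finset.erase_insert hit, ← Finset.erase_insert hiu, htu]
  · rw [Finset.disjoint_left]
    intro t ht htimg
    rw [Finset.mem_image] at htimg
    obtain ⟨u, hu, rfl⟩ := htimg
    have : i ∉ insert i u := fun hmem => h1 ((Finset.mem_powersetCard.1 ht).1 hmem)
    exact this (Finset.mem_insert_self i u)

lemma powersetCard_erase (s : Finset α) (i : α) (k : ℕ) :
    (s.erase i).powersetCard k = (s.powersetCard k).filter (fun t => i ∉ t) := by
  ext t
  simp only [Finset.mem_powersetCard, Finset.mem_filter, Finset.subset_erase]
  tauto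

lemma sum_Esum_erase (w : α → ℝ) (s : Finset α) (k : ℕ) (hk : k ≤ s.card) :
    ∑ i ∈ s, Esum w (s.erase i) k = ((s.card - k : ℕ) : ℝ) * Esum w s k := by
  have h1 : ∀ i ∈ s, Esum w (s.erase i) k
      = ∑ t ∈ s.powersetCard k, if i ∉ t then ∏ j ∈ t, w j else 0 := by
    intro i _
    rw [Esum, powersetCard_erase, Finset.sum_filter]
  rw [Finset.sum_congr rfl h1, Finset.sum_comm, Esum, Finset.mul_sum]
  refine Finset.sum_congr rfl fun t ht => ?_
  obtain ⟨hts, htc⟩ := Finset.mem_powersetCard.1 ht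
  rw [← Finset.sum_filter, Finset.sum_const, ← Finset.sdiff_eq_filter,
    Finset.card_sdiff_of_subset hts, htc, nsmul_eq_mul]

lemma sum_mul_Esum_erase (w : α → ℝ) (s : Finset α) (k : ℕ) :
    ∑ i ∈ s, w i * Esum w (s.erase i) k = ((k+1 : ℕ) : ℝ) * Esum w s (k+1) := by
  by_cases hk : k + 1 ≤ s.card
  · have h1 : ∀ i ∈ s, w i * Esum w (s.erase i) k
        = Esum w s (k+1) - Esum w (s.erase i) (k+1) := fun i hi => by
      rw [Esum_erase hi k]; ring
    rw [Finset.sum_congr rfl h1, Finset.sum_sub_distrib, Finset.sum_const,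
      sum_Esum_erase w s (k+1) hk]
    have h2 : ((s.card - (k+1) : ℕ) : ℝ) = (s.card : ℝ) - ((k+1 : ℕ) : ℝ) := by
      rw [Nat.cast_sub hk]
    rw [h2, nsmul_eq_mul]
    ring
  · push_neg at hk
    have h2 : Esum w s (k+1) = 0 := Esum_of_lt w hk
    have h3 : ∀ i ∈ s, w i * Esum w (s.erase i) k = 0 := by
      intro i hi
      have hcp : 0 < s.card := Finset.card_pos.2 ⟨i, hi⟩
      have hc : (s.erase i).card < k := by rw [Finset.card_erase_of_mem hi]; omega
      rw [Esum_of_lt w hc, mul_zero]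
    rw [h2, Finset.sum_congr rfl h3]
    simp



lemma coeff_prod_X_sub_C_pos (M : Multiset ℝ) (hM : ∀ r ∈ M, r < 0) :
    ∀ j ≤ Multiset.card M, 0 < ((M.map fun a => (X : ℝ[X]) - C a).prod).coeff j := by
  induction M using Multiset.induction with
  | empty =>
    intro j hj
    simp only [Multiset.card_zero, Nat.le_zero] at hj
    subst hj
    simp
  | cons a M ih =>
    intro j hj
    have ha : a < 0 := hM a (Multiset.mem_cons_self a M)
    have hM' : ∀ r ∈ M, r < 0 := fun r hr => hM r (Multiset.mem_cons_of_mem hr)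
    have ih' := ih hM'
    set p : ℝ[X] := (M.map fun a => (X : ℝ[X]) - C a).prod with hp
    have hmon : p.Monic := monic_multiset_prod_of_monic _ _ (fun q _ => monic_X_sub_C q)
    have hdeg : p.natDegree = Multiset.card M := by
      rw [hp, natDegree_multiset_prod_of_monic _ (by
        intro q hq
        rw [Multiset.mem_map] at hq
        obtain ⟨r, _, rfl⟩ := hq
        exact monic_X_sub_C r), Multiset.map_map]
      simp [Function.comp, natDegree_X_sub_C]
    rw [Multiset.map_cons, Multiset.prod_cons, sub_mul, Polynomial.coeff_sub, coeff_C_mul]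
    rcases Nat.eq_zero_or_pos j with rfl | hjpos
    · rw [Polynomial.coeff_X_mul_zero]
      have h0 : 0 < p.coeff 0 := ih' 0 (Nat.zero_le _)
      nlinarith
    · obtain ⟨j', rfl⟩ : ∃ j', j = j' + 1 := ⟨j - 1, by omega⟩
      rw [Polynomial.coeff_X_mul]
      have h1 : 0 < p.coeff j' := ih' j' (by simp at hj; omega)
      have h2 : 0 ≤ p.coeff (j' + 1) := by
        by_cases hc : j' + 1 ≤ Multiset.card M
        · exact (ih' _ hc).le
        · rw [Polynomial.coeff_eq_zero_of_natDegree_lt (by omega)]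
      nlinarith


lemma esum_pos_of_nonneg {α : Type*} [DecidableEq α] (w : α → ℝ) (s : Finset α) (K : ℕ)
    (h0 : ∀ j, 1 ≤ j → j ≤ K → 0 ≤ Esum w s j) (hKpos : 0 < Esum w s K) :
    ∀ j, 1 ≤ j → j ≤ K → 0 < Esum w s j := by
  have hKm : K ≤ s.card := by
    by_contra h
    push_neg at h
    rw [Esum_of_lt w h] at hKpos
    exact lt_irrefl 0 hKpos
  set m := s.card with hm
  set P : ℝ[X] := ∏ i ∈ s, (X + C (w i)) with hP
  have hPmonic : P.Monic := monic_prod_of_monic _ _ fun i _ => monic_X_add_C (w i)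
  have hPdeg : P.natDegree = m := by
    rw [hP, natDegree_prod _ _ (fun i _ => (monic_X_add_C (w i)).ne_zero)]
    simp [natDegree_X_add_C]
    exact hm.symm
  have hPcoeff : ∀ j ≤ m, P.coeff (m - j) = Esum w s j := by
    intro j hj
    have h1 := Finset.prod_X_add_C_coeff s w (Nat.sub_le m j)
    have h2 : m - (m - j) = j := by omega
    rw [hP, ← hm] at *
    rw [h1, h2]
    rfl
  set q : ℝ[X] := derivative^[m - K] P with hq
  have hqcoeff : ∀ r ≤ K, q.coeff r
      = ((r + (m - K)).descFactorial (m - K) : ℝ) * Esum w s (K - r) := by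
    intro r hr
    rw [hq, Polynomial.coeff_iterate_derivative, nsmul_eq_mul]
    congr 1
    have h1 : r + (m - K) = m - (K - r) := by omega
    rw [h1, hPcoeff (K - r) (by omega)]
  have hdpos : ∀ r : ℕ, (0:ℝ) < ((r + (m - K)).descFactorial (m - K) : ℝ) := by
    intro r
    have : (r + (m - K)).descFactorial (m - K) ≠ 0 := by
      rw [Ne, Nat.descFactorial_eq_zero_iff_lt]
      omega
    have h2 : 0 < (r + (m - K)).descFactorial (m - K) := Nat.pos_of_ne_zero this
    exact_mod_cast h2
  have hqK : q.coeff K = ((K + (m - K)).descFactorial (m - K) : ℝ) := by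
    rw [hqcoeff K le_rfl, Nat.sub_self, Esum_zero, mul_one]
  have hqdeg_le : q.natDegree ≤ K := by
    have h1 := Polynomial.natDegree_iterate_derivative P (m - K)
    rw [hPdeg, ← hq] at h1
    omega
  have hqdeg : q.natDegree = K := by
    refine le_antisymm hqdeg_le (Polynomial.le_natDegree_of_ne_zero ?_)
    rw [hqK]
    exact (hdpos K).ne'
  have hqne : q ≠ 0 := fun h => by
    rw [h, Polynomial.coeff_zero] at hqK
    exact (hdpos K).ne (by rw [hqK])
  have hPsplits : P.Splits := by
    rw [hP]
    apply Splits.prod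
    intro i _
    have : (X : ℝ[X]) + C (w i) = X - C (-(w i)) := by rw [map_neg, sub_neg_eq_add]
    rw [this]
    exact Splits.X_sub_C _
  have hProots : Multiset.card P.roots = m := by
    rw [(splits_iff_card_roots).1 hPsplits, hPdeg]
  have hiter : ∀ j : ℕ, Multiset.card P.roots ≤ Multiset.card (derivative^[j] P).roots + j := by
    intro j
    induction j with
    | zero => simp
    | succ j ih =>
      have h1 := Polynomial.card_roots_le_derivative (derivative^[j] P)
      rw [Function.iterate_succ_apply']
      omega
  have hqcard : Multiset.card q.roots = K := by
    have h1 : Multiset.card q.roots ≤ K := hqdeg ▸ Polynomial.card_roots' q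
    have h2 := hiter (m - K)
    rw [hProots, ← hq] at h2
    omega
  have hcoeff_nonneg : ∀ r : ℕ, 0 ≤ q.coeff r := by
    intro r
    by_cases hr : r ≤ K
    · rw [hqcoeff r hr]
      refine mul_nonneg (hdpos r).le ?_
      rcases Nat.eq_zero_or_pos (K - r) with h | h
      · rw [h, Esum_zero]; norm_num
      · exact h0 _ h (by omega)
    · rw [Polynomial.coeff_eq_zero_of_natDegree_lt (by omega)]
  have heval : ∀ x : ℝ, 0 ≤ x → 0 < q.eval x := by
    intro x hx
    rw [Polynomial.eval_eq_sum_range' (show q.natDegree < K + 1 by omega)]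
    refine Finset.sum_pos' (fun r _ => mul_nonneg (hcoeff_nonneg r) (pow_nonneg hx r)) ?_
    refine ⟨0, Finset.mem_range.2 (by omega), ?_⟩
    rw [pow_zero, mul_one, hqcoeff 0 (by omega), Nat.sub_zero]
    exact mul_pos (hdpos 0) hKpos
  have hroots_neg : ∀ r ∈ q.roots, r < 0 := by
    intro r hr
    by_contra h
    push_neg at h
    have h1 := heval r h
    have h2 : q.eval r = 0 := (Polynomial.mem_roots hqne).1 hr
    rw [h2] at h1
    exact lt_irrefl 0 h1
  have hsplit : q.Splits := splits_iff_card_roots.2 (by rw [hqcard, hqdeg])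
  have hfact : q = C q.leadingCoeff * (q.roots.map fun a => X - C a).prod :=
    hsplit.eq_prod_roots
  have hlead : 0 < q.leadingCoeff := by
    rw [Polynomial.leadingCoeff, hqdeg, hqK]
    exact hdpos K
  intro j hj1 hjK
  have h1 : 0 < q.coeff (K - j) := by
    rw [hfact, Polynomial.coeff_C_mul]
    exact mul_pos hlead (coeff_prod_X_sub_C_pos q.roots hroots_neg (K - j) (by omega))
  rw [hqcoeff (K - j) (by omega)] at h1
  have h2 : K - (K - j) = j := by omega
  rw [h2] at h1
  nlinarith [hdpos (K - j), h1]


lemma lemR {α : Type*} [DecidableEq α] (w : α → ℝ) {s : Finset α} {i : α} (hi : i ∈ s)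
    (hwi : w i ≤ 0) (K : ℕ) (hpos : ∀ j, 1 ≤ j → j ≤ K → 0 < Esum w s j) :
    ∀ j, j ≤ K → 0 < Esum w (s.erase i) j := by
  intro j
  induction j with
  | zero => intro _; rw [Esum_zero]; norm_num
  | succ j ihj =>
    intro hj
    have h1 : 0 < Esum w (s.erase i) j := ihj (by omega)
    have h2 := Esum_erase (w := w) hi j
    have h3 := hpos (j+1) (by omega) hj
    nlinarith

lemma lemB {α : Type*} [DecidableEq α] :
    ∀ (K : ℕ) (w : α → ℝ) (s : Finset α),
    (∀ j, 1 ≤ j → j ≤ K → 0 < Esum w s j) →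
    ∀ i ∈ s, ∀ j, 1 ≤ j → j < K → 0 < Esum w (s.erase i) j := by
  intro K
  induction K with
  | zero => intro w s _ i _ j _ h; omega
  | succ K ih =>
    intro w s hpos i hi j hj1 hjK
    by_cases hcase : j < K
    · exact ih w s (fun l h1 h2 => hpos l h1 (by omega)) i hi j hj1 hcase
    have hjeq : j = K := by omega
    subst hjeq
    by_contra hneg
    push_neg at hneg
    have ha : ∀ l, l < j → 0 < Esum w (s.erase i) l := by
      intro l hl
      rcases Nat.eq_zero_or_pos l with rfl | h
      · rw [Esum_zero]; norm_num
      · exact ih w s (fun l' h1 h2 => hpos l' h1 (by omega)) i hi l h hl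
    obtain ⟨j0, hj0mem, hj0min⟩ := Finset.exists_min_image (Finset.Icc 1 j)
      (fun l => Esum w s l / Esum w (s.erase i) (l - 1)) ⟨1, by rw [Finset.mem_Icc]; omega⟩
    rw [Finset.mem_Icc] at hj0mem
    set tb := Esum w s j0 / Esum w (s.erase i) (j0 - 1) with htb
    have haj0 : 0 < Esum w (s.erase i) (j0 - 1) := ha _ (by omega)
    have htbpos : 0 < tb := div_pos (hpos j0 hj0mem.1 (by omega)) haj0
    set v := Function.update w i (w i - tb) with hv
    have hvw : ∀ l ∈ s.erase i, v l = w l := by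
      intro l hl
      rw [hv, Function.update_of_ne (Finset.ne_of_mem_erase hl)]
    have hvi : v i = w i - tb := Function.update_self i _ w
    have hkey : ∀ l : ℕ, Esum v s (l+1) = Esum w s (l+1) - tb * Esum w (s.erase i) l := by
      intro l
      rw [Esum_erase (w := v) hi l, Esum_congr hvw (l+1), Esum_congr hvw l, hvi,
        Esum_erase (w := w) hi l]
      ring
    have hnonneg : ∀ l, 1 ≤ l → l ≤ j + 1 → 0 ≤ Esum v s l := by
      intro l h1 h2
      obtain ⟨l', rfl⟩ : ∃ l', l = l' + 1 := ⟨l - 1, by omega⟩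
      rw [hkey l']
      by_cases hl : l' + 1 ≤ j
      · have hal : 0 < Esum w (s.erase i) l' := ha l' (by omega)
        have hmin := hj0min (l'+1) (Finset.mem_Icc.2 ⟨by omega, hl⟩)
        simp only [Nat.add_sub_cancel] at hmin
        have h4 : tb * Esum w (s.erase i) l' ≤ Esum w s (l'+1) := by
          have h5 := mul_le_mul_of_nonneg_right hmin hal.le
          rwa [div_mul_cancel₀ _ hal.ne'] at h5
        linarith
      · have hl' : l' = j := by omega
        rw [hl']
        have h6 : 0 < Esum w s (j+1) := hpos (j+1) (by omega) le_rfl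
        nlinarith
    have hKpos' : 0 < Esum v s (j+1) := by
      rw [hkey j]
      have h6 : 0 < Esum w s (j+1) := hpos (j+1) (by omega) le_rfl
      nlinarith
    have hall := esum_pos_of_nonneg v s (j+1) hnonneg hKpos'
    have hzero : Esum v s j0 = 0 := by
      obtain ⟨j0', rfl⟩ : ∃ l', j0 = l' + 1 := ⟨j0 - 1, by omega⟩
      rw [hkey j0', htb]
      simp only [Nat.add_sub_cancel]
      rw [div_mul_cancel₀]
      · ring
      · simp only [Nat.add_sub_cancel] at haj0
        exact haj0.ne'
    have h7 := hall j0 (by omega) (by omega)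
    rw [hzero] at h7
    exact lt_irrefl 0 h7

end AuxLemmas

theorem stmt3 {n : ℕ} (k : ℕ) (hk : 1 ≤ k) (hkn : k ≤ n) (lam : Fin n → ℝ)
    (hG : lam ∈ GardingCone n k) (hsort : Antitone lam) (i : Fin n) (hi : lam i ≤ 0) :
    -lam i ≤ (((n : ℝ) - k) / k) * lam ⟨0, by omega⟩ := by
  classical
  have hn : 0 < n := by omega
  set z : Fin n := ⟨0, by omega⟩ with hz
  have hpos : ∀ j, 1 ≤ j → j ≤ k → 0 < Esum lam Finset.univ j := fun j h1 h2 => hG j h1 h2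
  have h1max : ∀ l : Fin n, lam l ≤ lam z := fun l => hsort (by
    rw [hz, Fin.le_def]
    exact Nat.zero_le _)
  have hzpos : 0 < lam z := by
    have h1 : 0 < Esum lam Finset.univ 1 := hpos 1 le_rfl hk
    have h2 : Esum lam Finset.univ 1 = ∑ l : Fin n, lam l := by
      rw [Esum, Finset.powersetCard_one, Finset.sum_map]
      simp
    have h3 : ∑ l : Fin n, lam l ≤ ∑ _l : Fin n, lam z := Finset.sum_le_sum fun l _ => h1max l
    rw [Finset.sum_const, Finset.card_univ, Fintype.card_fin, nsmul_eq_mul] at h3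
    by_contra hc
    push_neg at hc
    have h4 : (n : ℝ) * lam z ≤ 0 := mul_nonpos_of_nonneg_of_nonpos (by positivity) hc
    rw [h2] at h1
    linarith
  set s' : Finset (Fin n) := Finset.univ.erase i with hs'
  have hs'card : s'.card = n - 1 := by
    rw [hs', Finset.card_erase_of_mem (Finset.mem_univ i), Finset.card_univ, Fintype.card_fin]
  have hpos' : ∀ j, j ≤ k → 0 < Esum lam s' j := lemR lam (Finset.mem_univ i) hi k hpos
  obtain ⟨k', rfl⟩ : ∃ k', k = k' + 1 := ⟨k - 1, by omega⟩
  have hb : ∀ l ∈ s', 0 < Esum lam (s'.erase l) k' := by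
    intro l hl
    rcases Nat.eq_zero_or_pos k' with rfl | h
    · rw [Esum_zero]; norm_num
    · exact lemB (k'+1) lam s' (fun j _ hj2 => hpos' j hj2) l hl k' h (by omega)
  have hL3 : ∑ l ∈ s', lam l * Esum lam (s'.erase l) k'
      = ((k' + 1 : ℕ) : ℝ) * Esum lam s' (k'+1) := sum_mul_Esum_erase lam s' k'
  have hL4 : ∑ l ∈ s', Esum lam (s'.erase l) k'
      = ((s'.card - k' : ℕ) : ℝ) * Esum lam s' k' :=
    sum_Esum_erase lam s' k' (by rw [hs'card]; omega)
  have hsum : ((k' + 1 : ℕ) : ℝ) * Esum lam s' (k'+1)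
      ≤ lam z * (((s'.card - k' : ℕ) : ℝ) * Esum lam s' k') := by
    rw [← hL3, ← hL4, Finset.mul_sum]
    exact Finset.sum_le_sum fun l hl =>
      mul_le_mul_of_nonneg_right (h1max l) (hb l hl).le
  have hex : Esum lam Finset.univ (k'+1) = Esum lam s' (k'+1) + lam i * Esum lam s' k' :=
    Esum_erase (Finset.mem_univ i) k'
  have hEk' : 0 < Esum lam s' k' := hpos' k' (by omega)
  have hEuniv : 0 < Esum lam Finset.univ (k'+1) := hpos (k'+1) (by omega) le_rfl
  have hcast : ((s'.card - k' : ℕ) : ℝ) = (n : ℝ) - ((k' + 1 : ℕ) : ℝ) := by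
    rw [hs'card]
    have h5 : n - 1 - k' = n - (k' + 1) := by omega
    rw [h5, Nat.cast_sub hkn]
  rw [hcast] at hsum
  have hstep : (-lam i) * Esum lam s' k' < Esum lam s' (k'+1) := by
    rw [hex] at hEuniv
    linarith
  have hkR : (0:ℝ) < ((k' + 1 : ℕ) : ℝ) := by positivity
  rw [div_mul_eq_mul_div, le_div_iff₀ hkR]
  nlinarith [mul_lt_mul_of_pos_left hstep hkR, hEk', hzpos, hsum, hkR]
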